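/- Let S be epsilon-strongly graded by a small groupoid G, with ε_g the identity of S_g S_{g^{-1}}. Then for every composable pair (g,h), the multiplication map m_{g,h} : S_g ⊗_{S_{d(g)}} S_h → ε_g S_{gh} is bijective (an isomorphism of additive groups and of bimodules). -/

import Mathlib

/- Setup: a ring `S` graded by a small groupoid.  The groupoid is given by a
`CategoryTheory.Groupoid` structure on a type `Obj` of objects.  Composition
convention: for `g : X ⟶ Y` and `h : Y ⟶ Z`, `g ≫ h : X ⟶ Z`; the grading
satisfies `S_g · S_h ⊆ S_{g ≫ h}` for composable morphisms and
`S_g · S_h = 0` otherwise, and `S = ⊕_{g} S_g` (an internal direct sum over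
the type of all morphisms). -/

open CategoryTheory DirectSum

/-- The type of all morphisms of the groupoid. -/
abbrev MorTot (Obj : Type u) [Groupoid.{v} Obj] : Type (max u v) := Σ X Y : Obj, X ⟶ Y

/-- Product of two additive subgroups of a ring: the additive span of the set of
pairwise products. -/
def aMul {S : Type w} [Ring S] (A B : AddSubgroup S) : AddSubgroup S :=
  AddSubgroup.closure {x : S | ∃ a ∈ A, ∃ b ∈ B, x = a * b}

/-- A grading of the ring `S` by the groupoid with objects `Obj`. -/
structure GroupoidGrading (Obj : Type u) [Groupoid.{v} Obj] [DecidableEq (MorTot Obj)]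
    (S : Type w) [Ring S] where
  comp : ∀ ⦃X Y : Obj⦄, (X ⟶ Y) → AddSubgroup S
  internal : DirectSum.IsInternal (fun g : MorTot Obj => comp g.2.2)
  mul_mem : ∀ ⦃X Y Z : Obj⦄ (g : X ⟶ Y) (h : Y ⟶ Z) ⦃a b : S⦄,
    a ∈ comp g → b ∈ comp h → a * b ∈ comp (g ≫ h)
  mul_eq_zero : ∀ ⦃X Y Z W : Obj⦄ (g : X ⟶ Y) (h : Z ⟶ W), Y ≠ Z →
    ∀ ⦃a b : S⦄, a ∈ comp g → b ∈ comp h → a * b = 0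

variable {Obj : Type u} [Groupoid.{v} Obj] [DecidableEq (MorTot Obj)]
  {S : Type w} [Ring S]

/-- The component `(1_S)_e ∈ S_e` of `1` at the identity morphism of `X`. -/
noncomputable def GroupoidGrading.oneComponent (hS : GroupoidGrading Obj S) (X : Obj) : S :=
  ((Equiv.ofBijective _ hS.internal).symm (1 : S) ⟨X, X, 𝟙 X⟩ : hS.comp (𝟙 X))

/-- `I` is a unital ideal of the (sub)ring `C`. -/
def IsUnitalIdealOf {S : Type w} [Ring S] (I C : AddSubgroup S) : Prop :=
  I ≤ C ∧ (∀ a ∈ C, ∀ x ∈ I, a * x ∈ I ∧ x * a ∈ I) ∧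
    ∃ e ∈ I, ∀ x ∈ I, e * x = x ∧ x * e = x

/-- `S` is epsilon-strongly graded: each `S_g S_{g⁻¹}` is a unital ideal of
`S_{c(g)}` and `S_g S_h = (S_g S_{g⁻¹}) S_{gh} = S_{gh} (S_{h⁻¹} S_h)` for all
composable pairs. -/
def GroupoidGrading.EpsilonStrong {Obj : Type u} [Groupoid.{v} Obj]
    [DecidableEq (MorTot Obj)] {S : Type w} [Ring S]
    (hS : GroupoidGrading Obj S) : Prop :=
  (∀ ⦃X Y : Obj⦄ (g : X ⟶ Y),
     IsUnitalIdealOf (aMul (hS.comp g) (hS.comp (Groupoid.inv g))) (hS.comp (𝟙 X))) ∧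
  (∀ ⦃X Y Z : Obj⦄ (g : X ⟶ Y) (h : Y ⟶ Z),
     aMul (hS.comp g) (hS.comp h)
       = aMul (aMul (hS.comp g) (hS.comp (Groupoid.inv g))) (hS.comp (g ≫ h)) ∧
     aMul (hS.comp g) (hS.comp h)
       = aMul (hS.comp (g ≫ h)) (aMul (hS.comp (Groupoid.inv h)) (hS.comp h)))

/-! ### Auxiliary lemmas -/

lemma neg_list_sum {T : Type u₂} [AddCommGroup T] {α : Type u₁} (l : List α) (f : α → T) :
    -(l.map f).sum = (l.map fun p => -(f p)).sum := by
  induction l with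
  | nil => simp
  | cons p tl ih => simp only [List.map_cons, List.sum_cons, neg_add, ih]

lemma aMul_left_id {e : S} {A B : AddSubgroup S} (he : ∀ p ∈ A, e * p = p) :
    ∀ x ∈ aMul A B, e * x = x := by
  intro x hx
  refine AddSubgroup.closure_induction ?_ ?_ ?_ ?_ hx
  · rintro y ⟨a, ha, b, hb, rfl⟩
    rw [← mul_assoc, he a ha]
  · exact mul_zero e
  · intro y z _ _ hy hz
    rw [mul_add, hy, hz]
  · intro y _ hy
    rw [mul_neg, hy]

lemma aMul_repr {A B : AddSubgroup S} {x : S} (hx : x ∈ aMul A B) :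
    ∃ l : List (S × S), (∀ p ∈ l, p.1 ∈ A ∧ p.2 ∈ B) ∧
      x = (l.map fun p => p.1 * p.2).sum := by
  refine AddSubgroup.closure_induction ?_ ?_ ?_ ?_ hx
  · rintro y ⟨a, ha, b, hb, rfl⟩
    exact ⟨[(a, b)], by simp [ha, hb], by simp⟩
  · exact ⟨[], by simp, by simp⟩
  · rintro y z _ _ ⟨l₁, h₁, rfl⟩ ⟨l₂, h₂, rfl⟩
    refine ⟨l₁ ++ l₂, ?_, by simp⟩
    intro p hp
    rcases List.mem_append.mp hp with h | h
    exacts [h₁ p h, h₂ p h]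
  · rintro y _ ⟨l, hl, rfl⟩
    refine ⟨l.map fun p => (-p.1, p.2), ?_, ?_⟩
    · intro p hp
      simp only [List.mem_map] at hp
      obtain ⟨q, hq, rfl⟩ := hp
      exact ⟨A.neg_mem (hl q hq).1, (hl q hq).2⟩
    · simpa [Function.comp_def, neg_mul] using neg_list_sum l (fun p => p.1 * p.2)

lemma list_sum_map_add {α : Type u₁} {T : Type u₂} [AddCommGroup T] (l : List α) (f g : α → T) :
    (l.map fun x => f x + g x).sum = (l.map f).sum + (l.map g).sum := by
  induction l with
  | nil => simp
  | cons p tl ih => simp only [List.map_cons, List.sum_cons, ih]; abel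

lemma decompose_symm_of (hS : GroupoidGrading Obj S) {X Y : Obj} {g : X ⟶ Y} {s : S}
    (hs : s ∈ hS.comp g) :
    (Equiv.ofBijective _ hS.internal).symm s
      = DirectSum.of (fun k : MorTot Obj => (hS.comp k.2.2 : AddSubgroup S)) ⟨X, Y, g⟩ ⟨s, hs⟩ := by
  rw [Equiv.symm_apply_eq]
  exact (DirectSum.coeAddMonoidHom_of (fun k : MorTot Obj => (hS.comp k.2.2 : AddSubgroup S))
    ⟨X, Y, g⟩ ⟨s, hs⟩).symm

lemma oneComponent_mem (hS : GroupoidGrading Obj S) (Y : Obj) :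
    hS.oneComponent Y ∈ hS.comp (𝟙 Y) :=
  ((Equiv.ofBijective _ hS.internal).symm (1 : S) ⟨Y, Y, 𝟙 Y⟩ : hS.comp (𝟙 Y)).2

lemma mul_oneComponent (hS : GroupoidGrading Obj S) {X Y : Obj} (g : X ⟶ Y)
    {s : S} (hs : s ∈ hS.comp g) : s * hS.oneComponent Y = s := by
  classical
  set A : (k : MorTot Obj) → AddSubgroup S := fun k => hS.comp k.2.2 with hA
  set E : (⨁ k : MorTot Obj, A k) ≃ S := Equiv.ofBijective _ hS.internal with hE
  set u : ⨁ k : MorTot Obj, A k := E.symm 1 with huu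
  have hEapp : ∀ v : ⨁ k : MorTot Obj, A k, E v = DirectSum.coeAddMonoidHom A v := fun v => rfl
  have hu : (1 : S) = ∑ k ∈ DFinsupp.support u, ((u k : S)) := by
    calc (1 : S) = E u := (E.apply_symm_apply 1).symm
    _ = DirectSum.coeAddMonoidHom A u := hEapp u
    _ = DirectSum.coeAddMonoidHom A
        (∑ k ∈ DFinsupp.support u, DirectSum.of (fun k => A k) k (u k)) := by
        rw [DirectSum.sum_support_of]
    _ = ∑ k ∈ DFinsupp.support u, ((u k : S)) := by
        rw [map_sum]
        exact Finset.sum_congr rfl fun k _ => DirectSum.coeAddMonoidHom_of A k (u k)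
  set P : S →+ S :=
    { toFun := fun y => ((E.symm y ⟨X, Y, g⟩ : A ⟨X, Y, g⟩) : S)
      map_zero' := by
        have h0 : E.symm 0 = 0 := by
          rw [Equiv.symm_apply_eq, hEapp]; exact (map_zero _).symm
        show ((E.symm 0 ⟨X, Y, g⟩ : A ⟨X, Y, g⟩) : S) = 0
        rw [h0]; rfl
      map_add' := by
        intro y z
        have hadd : E.symm (y + z) = E.symm y + E.symm z := by
          rw [Equiv.symm_apply_eq, hEapp, map_add, ← hEapp, ← hEapp,
            E.apply_symm_apply, E.apply_symm_apply]
        show ((E.symm (y + z) ⟨X, Y, g⟩ : A ⟨X, Y, g⟩) : S)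
          = ((E.symm y ⟨X, Y, g⟩ : A ⟨X, Y, g⟩) : S) + ((E.symm z ⟨X, Y, g⟩ : A ⟨X, Y, g⟩) : S)
        rw [hadd]; rfl } with hP
  have hP1 : ∀ {s' : S}, s' ∈ hS.comp g → P s' = s' := by
    intro s' hs'
    show ((E.symm s' ⟨X, Y, g⟩ : A ⟨X, Y, g⟩) : S) = s'
    rw [hE, decompose_symm_of hS hs', DirectSum.of_eq_same]
  have hP0 : ∀ (k : MorTot Obj), k ≠ ⟨X, Y, g⟩ → ∀ {y : S}, y ∈ hS.comp k.2.2 → P y = 0 := by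
    rintro ⟨A', B', k⟩ hk y hy
    show ((E.symm y ⟨X, Y, g⟩ : A ⟨X, Y, g⟩) : S) = 0
    rw [hE, decompose_symm_of hS hy, DirectSum.of_eq_of_ne _ _ _ hk.symm]
    rfl
  have key : s = ∑ k ∈ DFinsupp.support u, P (s * (u k : S)) := by
    calc s = P s := (hP1 hs).symm
    _ = P (s * 1) := by rw [mul_one]
    _ = P (∑ k ∈ DFinsupp.support u, s * (u k : S)) := by rw [← Finset.mul_sum, ← hu]
    _ = ∑ k ∈ DFinsupp.support u, P (s * (u k : S)) := map_sum P _ _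
  have hterm : ∀ k ∈ DFinsupp.support u, k ≠ (⟨Y, Y, 𝟙 Y⟩ : MorTot Obj) →
      P (s * (u k : S)) = 0 := by
    rintro ⟨A', B', k⟩ - hne
    by_cases hAY : Y = A'
    · subst A'
      have hmem : s * ((u ⟨Y, B', k⟩ : A ⟨Y, B', k⟩) : S) ∈ hS.comp (g ≫ k) :=
        hS.mul_mem g k hs (u ⟨Y, B', k⟩).2
      refine hP0 ⟨X, B', g ≫ k⟩ ?_ hmem
      intro hEq
      obtain ⟨-, hEq2⟩ := Sigma.mk.inj_iff.mp hEq
      obtain ⟨hBY, hEq3⟩ := Sigma.mk.inj_iff.mp (eq_of_heq hEq2)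
      subst B'
      have hgk : g ≫ k = g := eq_of_heq hEq3
      apply hne
      have hk1 : k = 𝟙 Y := by
        have := congrArg (fun z => Groupoid.inv g ≫ z) hgk
        simpa [← Category.assoc, Groupoid.inv_comp] using this
      rw [hk1]
    · have : s * ((u ⟨A', B', k⟩ : A ⟨A', B', k⟩) : S) = 0 :=
        hS.mul_eq_zero g k hAY hs (u ⟨A', B', k⟩).2
      rw [this, map_zero]
  have hsingle : s = P (s * ((u ⟨Y, Y, 𝟙 Y⟩ : A ⟨Y, Y, 𝟙 Y⟩) : S)) := by
    conv_lhs => rw [key]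
    refine Finset.sum_eq_single _ hterm ?_
    intro hnot
    rw [DFinsupp.notMem_support_iff.mp hnot]
    show P (s * ((0 : A ⟨Y, Y, 𝟙 Y⟩) : S)) = 0
    rw [ZeroMemClass.coe_zero, mul_zero, map_zero]
  have hone : hS.oneComponent Y = ((u ⟨Y, Y, 𝟙 Y⟩ : A ⟨Y, Y, 𝟙 Y⟩) : S) := rfl
  have hmem2 : s * hS.oneComponent Y ∈ hS.comp g := by
    have := hS.mul_mem g (𝟙 Y) hs (oneComponent_mem hS Y)
    rwa [Category.comp_id] at this
  rw [← hone] at hsingle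
  rw [hP1 hmem2] at hsingle
  exact hsingle.symm

/-- Let `S` be epsilon-strongly graded by a small groupoid, with
`ε_g` the identity of the unital ideal `S_g S_{g⁻¹}`.  For every composable pair
`(g, h)`, the multiplication map `m_{g,h} : S_g ⊗_{S_{d(g)}} S_h → ε_g S_{gh}`
is bijective.  The tensor product over the ring `S_{d(g)} = S_{c(h)}` (the
identity component `S_{𝟙 Y}`) is encoded by its universal property: `T` is an
additive group with a biadditive `S_{𝟙 Y}`-balanced map `t` through which every
biadditive balanced map factors uniquely; `m : T →+ S` is determined by
`m (t a b) = a * b`.  Conclusion: `m` is injective and its range is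
`ε_g S_{gh}`. -/
theorem multiplication_map_bijective (hS : GroupoidGrading Obj S)
    (hstr : hS.EpsilonStrong) {X Y Z : Obj} (g : X ⟶ Y) (h : Y ⟶ Z)
    (e : S) (he : e ∈ aMul (hS.comp g) (hS.comp (Groupoid.inv g)))
    (hid : ∀ x ∈ aMul (hS.comp g) (hS.comp (Groupoid.inv g)), e * x = x ∧ x * e = x)
    (T : Type w) [AddCommGroup T]
    (t : hS.comp g → hS.comp h → T)
    (tadd₁ : ∀ a a' b, t (a + a') b = t a b + t a' b)
    (tadd₂ : ∀ a b b', t a (b + b') = t a b + t a b')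
    (tbal : ∀ (a : hS.comp g) (b : hS.comp h) (r : S), r ∈ hS.comp (𝟙 Y) →
      ∀ (h₁ : (a : S) * r ∈ hS.comp g) (h₂ : r * (b : S) ∈ hS.comp h),
        t ⟨(a : S) * r, h₁⟩ b = t a ⟨r * (b : S), h₂⟩)
    (tuniv : ∀ (M : Type w) [AddCommGroup M] (b : hS.comp g → hS.comp h → M),
      (∀ a a' x, b (a + a') x = b a x + b a' x) →
      (∀ a x x', b a (x + x') = b a x + b a x') →
      (∀ (a : hS.comp g) (x : hS.comp h) (r : S), r ∈ hS.comp (𝟙 Y) →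
        ∀ (h₁ : (a : S) * r ∈ hS.comp g) (h₂ : r * (x : S) ∈ hS.comp h),
          b ⟨(a : S) * r, h₁⟩ x = b a ⟨r * (x : S), h₂⟩) →
      ∃! φ : T →+ M, ∀ a x, φ (t a x) = b a x)
    (m : T →+ S) (hm : ∀ a b, m (t a b) = (a : S) * (b : S)) :
    Function.Injective m ∧
    Set.range m = (fun y => e * y) '' ↑(hS.comp (g ≫ h)) := by
    classical
  obtain ⟨l, hl, hel⟩ := aMul_repr he
  -- `e` acts as a left identity on every `S_g S_{h'}`
  have eL : ∀ {Z' : Obj} (h' : Y ⟶ Z'), ∀ x ∈ aMul (hS.comp g) (hS.comp h'), e * x = x := by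
    intro Z' h' x hx
    rw [(hstr.2 g h').1] at hx
    exact aMul_left_id (fun p hp => (hid p hp).1) x hx
  -- `e` acts as a left identity on `S_g`
  have hea : ∀ a ∈ hS.comp g, e * a = a := by
    intro a ha
    have h1 : a * hS.oneComponent Y = a := mul_oneComponent hS g ha
    have h2 : a * hS.oneComponent Y ∈ aMul (hS.comp g) (hS.comp (𝟙 Y)) :=
      AddSubgroup.subset_closure ⟨a, ha, _, oneComponent_mem hS Y, rfl⟩
    have h3 := eL (𝟙 Y) _ h2
    rw [h1] at h3
    exact h3
  -- membership helpers
  have hcomp_h : ∀ {b y : S}, b ∈ hS.comp (Groupoid.inv g) → y ∈ hS.comp (g ≫ h) →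
      b * y ∈ hS.comp h := by
    intro b y hb hy
    have := hS.mul_mem (Groupoid.inv g) (g ≫ h) hb hy
    rwa [← Category.assoc, Groupoid.inv_comp, Category.id_comp] at this
  have hcomp_g1 : ∀ {a r : S}, a ∈ hS.comp g → r ∈ hS.comp (𝟙 Y) → a * r ∈ hS.comp g := by
    intro a r ha hr
    have := hS.mul_mem g (𝟙 Y) ha hr
    rwa [Category.comp_id] at this
  have hcomp_idY : ∀ {b a : S}, b ∈ hS.comp (Groupoid.inv g) → a ∈ hS.comp g →
      b * a ∈ hS.comp (𝟙 Y) := by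
    intro b a hb ha
    have := hS.mul_mem (Groupoid.inv g) g hb ha
    rwa [Groupoid.inv_comp] at this
  -- basic facts about t
  have t0 : ∀ x, t 0 x = 0 := by
    intro x
    have hh := tadd₁ 0 0 x
    rw [add_zero] at hh
    exact (add_left_cancel (show t 0 x + 0 = t 0 x + t 0 x by rw [add_zero, ← hh])).symm
  have t0' : ∀ a, t a 0 = 0 := by
    intro a
    have hh := tadd₂ a 0 0
    rw [add_zero] at hh
    exact (add_left_cancel (show t a 0 + 0 = t a 0 + t a 0 by rw [add_zero, ← hh])).symm
  have tneg₂ : ∀ a x, t a (-x) = - t a x := by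
    intro a x
    have hh := tadd₂ a x (-x)
    rw [add_neg_cancel, t0'] at hh
    exact (eq_neg_of_add_eq_zero_right hh.symm)
  -- T is generated by the image of t
  have hgenmem : ∀ τ : T, τ ∈ AddSubgroup.closure {τ : T | ∃ a x, τ = t a x} := by
    set H := AddSubgroup.closure {τ : T | ∃ a x, τ = t a x} with hH
    obtain ⟨φq, hφq, huq⟩ := tuniv (T ⧸ H) (fun _ _ => 0) (by simp) (by simp)
      (by intro a x r hr h₁ h₂; rfl)
    have h1 : (QuotientAddGroup.mk' H) = φq := huq _ (fun a x => by
      exact (QuotientAddGroup.eq_zero_iff _).mpr (AddSubgroup.subset_closure ⟨a, x, rfl⟩))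
    have h2 : (0 : T →+ T ⧸ H) = φq := huq _ (fun a x => rfl)
    intro τ
    have h3 : QuotientAddGroup.mk' H τ = 0 := by rw [h1, ← h2]; rfl
    exact (QuotientAddGroup.eq_zero_iff τ).mp h3
  have tInd : ∀ (p : T → Prop), (∀ a x, p (t a x)) → p 0 →
      (∀ τ τ', p τ → p τ' → p (τ + τ')) → (∀ τ, p τ → p (-τ)) → ∀ τ, p τ := by
    intro p hmem h0 hadd hneg τ
    refine AddSubgroup.closure_induction ?_ h0 ?_ ?_ (hgenmem τ)
    · rintro y ⟨a, x, rfl⟩; exact hmem a x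
    · intro y z _ _ hy hz; exact hadd y z hy hz
    · intro y _ hy; exact hneg y hy
  have hmaMul : ∀ τ : T, m τ ∈ aMul (hS.comp g) (hS.comp h) := by
    refine tInd _ ?_ ?_ ?_ ?_
    · intro a x; rw [hm]; exact AddSubgroup.subset_closure ⟨a, a.2, x, x.2, rfl⟩
    · rw [map_zero]; exact zero_mem _
    · intro τ τ' h1 h2; rw [map_add]; exact add_mem h1 h2
    · intro τ h1; rw [map_neg]; exact neg_mem h1
  have hmmem : ∀ τ : T, m τ ∈ hS.comp (g ≫ h) := by
    refine tInd _ ?_ ?_ ?_ ?_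
    · intro a x; rw [hm]; exact hS.mul_mem g h a.2 x.2
    · rw [map_zero]; exact zero_mem _
    · intro τ τ' h1 h2; rw [map_add]; exact add_mem h1 h2
    · intro τ h1; rw [map_neg]; exact neg_mem h1
  have hem : ∀ τ : T, e * m τ = m τ := fun τ => eL h _ (hmaMul τ)
  -- a total version of t
  set tt : S → S → T := fun a x =>
    if hax : a ∈ hS.comp g ∧ x ∈ hS.comp h then t ⟨a, hax.1⟩ ⟨x, hax.2⟩ else 0 with htt
  have tt_eq : ∀ {a x : S} (ha : a ∈ hS.comp g) (hx : x ∈ hS.comp h),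
      tt a x = t ⟨a, ha⟩ ⟨x, hx⟩ := by
    intro a x ha hx
    rw [htt]
    exact dif_pos ⟨ha, hx⟩
  have tt_zero : ∀ a : S, tt a 0 = 0 := by
    intro a
    by_cases hax : a ∈ hS.comp g ∧ (0 : S) ∈ hS.comp h
    · rw [tt_eq hax.1 hax.2]
      have harg : (⟨(0 : S), hax.2⟩ : hS.comp h) = 0 := rfl
      rw [harg]
      exact t0' _
    · simp only [htt]
      exact dif_neg hax
  have tt_add₂ : ∀ {a x x' : S}, a ∈ hS.comp g → x ∈ hS.comp h → x' ∈ hS.comp h →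
      tt a (x + x') = tt a x + tt a x' := by
    intro a x x' ha hx hx'
    rw [tt_eq ha (add_mem hx hx'), tt_eq ha hx, tt_eq ha hx']
    exact tadd₂ ⟨a, ha⟩ ⟨x, hx⟩ ⟨x', hx'⟩
  have tt_neg₂ : ∀ {a x : S}, a ∈ hS.comp g → x ∈ hS.comp h → tt a (-x) = - tt a x := by
    intro a x ha hx
    rw [tt_eq ha (neg_mem hx), tt_eq ha hx]
    exact tneg₂ ⟨a, ha⟩ ⟨x, hx⟩
  -- the candidate inverse, as a bare function on S
  set F : S → T := fun y => (l.map fun p => tt p.1 (p.2 * y)).sum with hF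
  have hF0 : F 0 = 0 := by
    show (l.map fun p => tt p.1 (p.2 * 0)).sum = 0
    have hmap : (l.map fun p => tt p.1 (p.2 * 0)) = l.map fun _ => (0 : T) :=
      List.map_congr_left (fun p _ => by rw [mul_zero, tt_zero])
    simp only [hmap]
    simp
  have Fadd : ∀ {y y' : S}, y ∈ hS.comp (g ≫ h) → y' ∈ hS.comp (g ≫ h) →
      F (y + y') = F y + F y' := by
    intro y y' hy hy'
    show (l.map fun p => tt p.1 (p.2 * (y + y'))).sum
      = (l.map fun p => tt p.1 (p.2 * y)).sum + (l.map fun p => tt p.1 (p.2 * y')).sum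
    have hmap : (l.map fun p => tt p.1 (p.2 * (y + y')))
        = l.map fun p => tt p.1 (p.2 * y) + tt p.1 (p.2 * y') :=
      List.map_congr_left (fun p hp => by
        rw [mul_add]
        exact tt_add₂ (hl p hp).1 (hcomp_h (hl p hp).2 hy) (hcomp_h (hl p hp).2 hy'))
    simp only [hmap]
    exact list_sum_map_add l _ _
  have Fneg : ∀ {y : S}, y ∈ hS.comp (g ≫ h) → F (-y) = - F y := by
    intro y hy
    show (l.map fun p => tt p.1 (p.2 * (-y))).sum = -(l.map fun p => tt p.1 (p.2 * y)).sum
    have hmap : (l.map fun p => tt p.1 (p.2 * (-y)))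
        = l.map fun p => -(tt p.1 (p.2 * y)) :=
      List.map_congr_left (fun p hp => by
        rw [mul_neg]
        exact tt_neg₂ (hl p hp).1 (hcomp_h (hl p hp).2 hy))
    simp only [hmap]
    exact (neg_list_sum l _).symm
  -- membership of partial sums
  have memsum : ∀ (l' : List (S × S)),
      (∀ p ∈ l', p.1 ∈ hS.comp g ∧ p.2 ∈ hS.comp (Groupoid.inv g)) →
      ((l'.map fun p => p.1 * p.2).sum) ∈ hS.comp (𝟙 X) := by
    intro l' hl'
    induction l' with
    | nil => simpa using zero_mem _
    | cons p tl ih =>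
        simp only [List.map_cons, List.sum_cons]
        refine add_mem ?_ (ih (fun q hq => hl' q (List.mem_cons_of_mem p hq)))
        have hp := hl' p (List.mem_cons_self (a := p) (l := tl))
        have := hS.mul_mem g (Groupoid.inv g) hp.1 hp.2
        rwa [Groupoid.comp_inv] at this
  -- the key computation
  have key : ∀ (l' : List (S × S))
      (hl' : ∀ p ∈ l', p.1 ∈ hS.comp g ∧ p.2 ∈ hS.comp (Groupoid.inv g))
      (av : hS.comp g) (xv : hS.comp h)
      (hmem : ((l'.map fun p => p.1 * p.2).sum) * (av : S) ∈ hS.comp g),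
      (l'.map fun p => tt p.1 (p.2 * ((av : S) * (xv : S)))).sum
        = t ⟨((l'.map fun p => p.1 * p.2).sum) * (av : S), hmem⟩ xv := by
    intro l'
    induction l' with
    | nil =>
        intro hl' av xv hmem
        have h0 : (⟨(List.map (fun p : S × S => p.1 * p.2) []).sum * (av : S), hmem⟩ :
            hS.comp g) = 0 := by
          apply Subtype.ext
          simp
        rw [h0, t0 xv]
        simp
    | cons p tl ih =>
        intro hl' av xv hmem
        have hp := hl' p (List.mem_cons_self (a := p) (l := tl))
        have htl := fun q hq => hl' q (List.mem_cons_of_mem p hq)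
        simp only [List.map_cons, List.sum_cons]
        have hax : (av : S) * (xv : S) ∈ hS.comp (g ≫ h) := hS.mul_mem g h av.2 xv.2
        have hr : p.2 * (av : S) ∈ hS.comp (𝟙 Y) := hcomp_idY hp.2 av.2
        have h1 : p.1 * (p.2 * (av : S)) ∈ hS.comp g := hcomp_g1 hp.1 hr
        have htlmem : ((tl.map fun p => p.1 * p.2).sum) * (av : S) ∈ hS.comp g := by
          have := hS.mul_mem (𝟙 X) g (memsum tl htl) av.2
          rwa [Category.id_comp] at this
        have hm2 : p.2 * ((av : S) * (xv : S)) ∈ hS.comp h := hcomp_h hp.2 hax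
        have h₂ : (p.2 * (av : S)) * (xv : S) ∈ hS.comp h := by
          rw [mul_assoc]; exact hm2
        have hhead : tt p.1 (p.2 * ((av : S) * (xv : S)))
            = t ⟨p.1 * (p.2 * (av : S)), h1⟩ xv := by
          rw [tt_eq hp.1 hm2]
          have hb := tbal ⟨p.1, hp.1⟩ xv (p.2 * (av : S)) hr h1 h₂
          have harg : (⟨p.2 * ((av : S) * (xv : S)), hm2⟩ : hS.comp h)
              = ⟨(p.2 * (av : S)) * (xv : S), h₂⟩ := Subtype.ext (mul_assoc _ _ _).symm
          rw [harg]
          exact hb.symm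
        rw [hhead, ih htl av xv htlmem, ← tadd₁]
        congr 1
        apply Subtype.ext
        show p.1 * (p.2 * (av : S)) + (tl.map fun p => p.1 * p.2).sum * (av : S)
          = (p.1 * p.2 + (tl.map fun p => p.1 * p.2).sum) * (av : S)
        rw [add_mul, mul_assoc]
  have hBt : ∀ (av : hS.comp g) (xv : hS.comp h), F ((av : S) * (xv : S)) = t av xv := by
    intro av xv
    have hmem : ((l.map fun p => p.1 * p.2).sum) * (av : S) ∈ hS.comp g := by
      rw [← hel, hea _ av.2]
      exact av.2
    show (l.map fun p => tt p.1 (p.2 * ((av : S) * (xv : S)))).sum = t av xv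
    rw [key l hl av xv hmem]
    have harg : (⟨((l.map fun p => p.1 * p.2).sum) * (av : S), hmem⟩ : hS.comp g) = av :=
      Subtype.ext (by
        show ((l.map fun p => p.1 * p.2).sum) * (av : S) = (av : S)
        rw [← hel]
        exact hea _ av.2)
    rw [harg]
  -- the induced endomorphism of T
  obtain ⟨φ, hφ, huniq⟩ := tuniv T (fun av xv => F ((av : S) * (xv : S)))
    (by
      intro av av' xv
      have hc : ((av + av' : hS.comp g) : S) * (xv : S)
          = (av : S) * (xv : S) + (av' : S) * (xv : S) := by
        rw [AddSubgroup.coe_add, add_mul]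
      show F (((av + av' : hS.comp g) : S) * (xv : S))
        = F ((av : S) * (xv : S)) + F ((av' : S) * (xv : S))
      rw [hc]
      exact Fadd (hS.mul_mem g h av.2 xv.2) (hS.mul_mem g h av'.2 xv.2))
    (by
      intro av xv xv'
      have hc : (av : S) * ((xv + xv' : hS.comp h) : S)
          = (av : S) * (xv : S) + (av : S) * (xv' : S) := by
        rw [AddSubgroup.coe_add, mul_add]
      show F ((av : S) * ((xv + xv' : hS.comp h) : S))
        = F ((av : S) * (xv : S)) + F ((av : S) * (xv' : S))
      rw [hc]
      exact Fadd (hS.mul_mem g h av.2 xv.2) (hS.mul_mem g h av.2 xv'.2))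
    (by
      intro av xv r hr h₁ h₂
      show F (((av : S) * r) * (xv : S)) = F ((av : S) * (r * (xv : S)))
      rw [mul_assoc])
  have hφid : ∀ τ : T, φ τ = τ := by
    have hh : AddMonoidHom.id T = φ := huniq _ (fun av xv => by
      simp only [AddMonoidHom.id_apply]
      exact (hBt av xv).symm)
    intro τ
    rw [← hh]
    rfl
  have hFm : ∀ τ : T, F (m τ) = φ τ := by
    refine tInd _ ?_ ?_ ?_ ?_
    · intro av xv
      rw [hm, hφ]
    · rw [map_zero, map_zero, hF0]
    · intro τ τ' h1 h2
      rw [map_add, map_add, Fadd (hmmem τ) (hmmem τ'), h1, h2]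
    · intro τ h1
      rw [map_neg, map_neg, Fneg (hmmem τ), h1]
  constructor
  · rw [injective_iff_map_eq_zero]
    intro τ hτ
    have hh := hFm τ
    rw [hτ, hF0, hφid] at hh
    exact hh.symm
  · apply Set.Subset.antisymm
    · rintro y ⟨τ, rfl⟩
      exact ⟨m τ, hmmem τ, hem τ⟩
    · rintro y ⟨z, hz, rfl⟩
      rw [hel]
      have hmain : ∀ (l' : List (S × S)),
          (∀ p ∈ l', p.1 ∈ hS.comp g ∧ p.2 ∈ hS.comp (Groupoid.inv g)) →
          ((l'.map fun p => p.1 * p.2).sum) * z ∈ Set.range ⇑m := by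
        intro l' hl'
        induction l' with
        | nil => exact ⟨0, by simp⟩
        | cons p tl ih =>
            have hp := hl' p (List.mem_cons_self (a := p) (l := tl))
            obtain ⟨τ₂, hτ₂⟩ := ih (fun q hq => hl' q (List.mem_cons_of_mem p hq))
            refine ⟨t ⟨p.1, hp.1⟩ ⟨p.2 * z, hcomp_h hp.2 hz⟩ + τ₂, ?_⟩
            rw [map_add, hτ₂, hm]
            simp only [List.map_cons, List.sum_cons]
            rw [add_mul, mul_assoc]
      exact hmain l hl
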